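/- (Example of blowup with nonnegative e₀ on the support) Let φ : ℝ → [0,∞) be even, radially decreasing, continuous, and κ, ε, δ > 0. Define Ω₊ = (δ, 1/2 + δ), Ω₋ = (−1/2 − δ, −δ), Ω = Ω₊ ∪ Ω₋, ρ₀ = 1_Ω, u₀ = −ε on Ω₊ and u₀ = +ε on Ω₋, and ψ₀ = u₀ + κΦ*ρ₀ with Φ(x) = ∫₀ˣ φ. Then ψ₀(δ⁺) − ψ₀((−δ)⁻) = −2ε + κ ∫_{−δ}^{δ} ∫_Ω φ(y − γ) dγ dy. In particular, if κ ∫_{−δ}^{δ} ∫_Ω φ(y − γ) dγ dy < 2ε, then ψ₀ is not monotonically increasing on Ω, even though ∂_x u₀ + κφ*ρ₀ > 0 everywhere on Ω. -/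

import Mathlib

open scoped Classical

open Set intervalIntegral MeasureTheory

/-- Example: two separated blocks of density moving toward one another.  Even though
`e₀ = ∂_x u₀ + κ φ*ρ₀ > 0` everywhere on `Ω`, the conserved quantity `ψ₀` fails to be
monotonically increasing on `Ω` when the gap `2δ` is small enough. -/
theorem example_nonnegative_e0_blowup
    (φ : ℝ → ℝ) (hφpos : ∀ x, 0 < φ x) (hφeven : ∀ x, φ (-x) = φ x)
    (hφdec : AntitoneOn φ (Ici 0)) (hφcont : Continuous φ)
    (κ ε δ : ℝ) (hκ : 0 < κ) (hε : 0 < ε) (hδ : 0 < δ)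
    (Φ : ℝ → ℝ) (hΦ : ∀ x : ℝ, Φ x = ∫ y in (0:ℝ)..x, φ y)
    (Ωp Ωm Ω : Set ℝ)
    (hΩp : Ωp = Ioo δ (1/2 + δ)) (hΩm : Ωm = Ioo (-(1/2) - δ) (-δ))
    (hΩ : Ω = Ωp ∪ Ωm)
    (u₀ : ℝ → ℝ)
    (hu₀ : ∀ x : ℝ, u₀ x = if x ∈ Ωp then -ε else if x ∈ Ωm then ε else 0)
    (ψ₀ : ℝ → ℝ)
    (hψ₀ : ∀ x : ℝ, ψ₀ x = u₀ x + κ * ∫ γ in Ω, Φ (x - γ)) :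
    ((-ε + κ * ∫ γ in Ω, Φ (δ - γ)) - (ε + κ * ∫ γ in Ω, Φ (-δ - γ))
        = -(2 * ε) + κ * ∫ y in (-δ)..δ, (∫ γ in Ω, φ (y - γ))) ∧
    ((κ * ∫ y in (-δ)..δ, (∫ γ in Ω, φ (y - γ))) < 2 * ε → ¬ MonotoneOn ψ₀ Ω) ∧
    (∀ x ∈ Ω, 0 < κ * ∫ γ in Ω, φ (x - γ)) := by
  -- basic facts about φ and Φ
  have hφint : ∀ a b : ℝ, IntervalIntegrable φ volume a b := fun a b =>
    hφcont.intervalIntegrable a b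
  have hΦeq : Φ = fun x => ∫ y in (0:ℝ)..x, φ y := funext hΦ
  have hΦcont : Continuous Φ := by
    rw [hΦeq]; exact intervalIntegral.continuous_primitive hφint 0
  have hφ0 : ∀ t, φ t ≤ φ 0 := by
    intro t
    rcases le_total 0 t with h | h
    · exact hφdec (mem_Ici.2 le_rfl) (mem_Ici.2 h) h
    · rw [← hφeven]
      exact hφdec (mem_Ici.2 le_rfl) (mem_Ici.2 (neg_nonneg.2 h)) (neg_nonneg.2 h)
  -- Ω is measurable with finite measure
  have hΩmeas : MeasurableSet Ω := by
    rw [hΩ, hΩp, hΩm]; exact measurableSet_Ioo.union measurableSet_Ioo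
  have hΩfin : volume Ω < ⊤ := by
    rw [hΩ, hΩp, hΩm]
    refine lt_of_le_of_lt (measure_union_le _ _) ?_
    rw [Real.volume_Ioo, Real.volume_Ioo]
    exact ENNReal.add_lt_top.2 ⟨ENNReal.ofReal_lt_top, ENNReal.ofReal_lt_top⟩
  have hint : ∀ h : ℝ → ℝ, Continuous h → IntegrableOn h Ω := by
    intro h hc
    rw [hΩ, hΩp, hΩm]
    exact ((hc.integrableOn_Icc).mono_set Ioo_subset_Icc_self).union
      ((hc.integrableOn_Icc).mono_set Ioo_subset_Icc_self)
  -- pointwise identity for Φ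
  have hpt : ∀ (γ a b : ℝ), Φ (b - γ) - Φ (a - γ) = ∫ y in a..b, φ (y - γ) := by
    intro γ a b
    rw [hΦ, hΦ, intervalIntegral.integral_comp_sub_right (fun y => φ y) γ,
      intervalIntegral.integral_interval_sub_left (hφint 0 (b - γ)) (hφint 0 (a - γ))]
  -- Fubini swap
  have hswap : ∀ a b : ℝ, a ≤ b →
      (∫ γ in Ω, ∫ y in a..b, φ (y - γ)) = ∫ y in a..b, ∫ γ in Ω, φ (y - γ) := by
    intro a b hab
    simp only [intervalIntegral.integral_of_le hab]
    apply MeasureTheory.integral_integral_swap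
    rw [Measure.prod_restrict]
    have hcont2 : Continuous fun p : ℝ × ℝ => φ (p.2 - p.1) :=
      hφcont.comp (continuous_snd.sub continuous_fst)
    have hfinprod : (volume : Measure (ℝ × ℝ)) (Ω ×ˢ Ioc a b) < ⊤ := by
      rw [Measure.volume_eq_prod, Measure.prod_prod]
      exact ENNReal.mul_lt_top hΩfin (by rw [Real.volume_Ioc]; exact ENNReal.ofReal_lt_top)
    have : (volume.prod volume) (Ω ×ˢ Ioc a b) < ⊤ := by
      rwa [← Measure.volume_eq_prod]
    refine Integrable.mono' (g := fun _ => φ 0) (integrableOn_const this.ne) ?_ ?_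
    · exact hcont2.aestronglyMeasurable.restrict
    · filter_upwards with p
      simp only [Function.uncurry, Real.norm_eq_abs]
      rw [abs_of_pos (hφpos _)]
      exact hφ0 _
  -- key identity
  have key : ∀ a b : ℝ, a ≤ b →
      (∫ γ in Ω, Φ (b - γ)) - (∫ γ in Ω, Φ (a - γ))
        = ∫ y in a..b, ∫ γ in Ω, φ (y - γ) := by
    intro a b hab
    have h1 : IntegrableOn (fun γ => Φ (b - γ)) Ω :=
      hint _ (hΦcont.comp (continuous_const.sub continuous_id))
    have h2 : IntegrableOn (fun γ => Φ (a - γ)) Ω :=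
      hint _ (hΦcont.comp (continuous_const.sub continuous_id))
    rw [← MeasureTheory.integral_sub h1 h2]
    rw [show (fun γ => Φ (b - γ) - Φ (a - γ)) = fun γ => ∫ y in a..b, φ (y - γ) from
      funext fun γ => hpt γ a b]
    exact hswap a b hab
  -- bound on the inner integral
  set C : ℝ := φ 0 * (volume Ω).toReal with hC
  have hC0 : 0 ≤ C := mul_nonneg (hφpos 0).le ENNReal.toReal_nonneg
  have hgbound : ∀ y : ℝ, ‖∫ γ in Ω, φ (y - γ)‖ ≤ C := by
    intro y
    refine MeasureTheory.norm_setIntegral_le_of_norm_le_const hΩfin (fun x _ => ?_)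
    · rw [Real.norm_eq_abs, abs_of_pos (hφpos _)]; exact hφ0 _
  set F : ℝ → ℝ := fun x => ∫ γ in Ω, Φ (x - γ) with hF
  set I : ℝ := ∫ y in (-δ)..δ, ∫ γ in Ω, φ (y - γ) with hI
  have hkeyδ : F δ - F (-δ) = I := key (-δ) δ (by linarith)
  refine ⟨by linear_combination κ * hkeyδ, ?_, ?_⟩
  · -- non-monotonicity
    intro hsmall hmono
    set η : ℝ := min (1/4 : ℝ) ((2 * ε - κ * I) / (2 * κ * (C + 1))) with hη
    have hden : 0 < 2 * κ * (C + 1) := by positivity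
    have hη0 : 0 < η := lt_min (by norm_num) (div_pos (by linarith) hden)
    have hη14 : η ≤ 1/4 := min_le_left _ _
    have hη2 : η ≤ (2 * ε - κ * I) / (2 * κ * (C + 1)) := min_le_right _ _
    have hηbound : 2 * κ * (C + 1) * η ≤ 2 * ε - κ * I := by
      rw [← le_div_iff₀' hden]; exact hη2
    set x₁ : ℝ := -δ - η with hx₁
    set x₂ : ℝ := δ + η with hx₂
    have hx₁m : x₁ ∈ Ωm := by rw [hΩm]; constructor <;> [linarith; linarith]
    have hx₂p : x₂ ∈ Ωp := by rw [hΩp]; constructor <;> [linarith; linarith]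
    have hx₁Ω : x₁ ∈ Ω := by rw [hΩ]; exact Or.inr hx₁m
    have hx₂Ω : x₂ ∈ Ω := by rw [hΩ]; exact Or.inl hx₂p
    have hx₁p : x₁ ∉ Ωp := by
      rw [hΩp]; intro h; have := h.1; simp only [hx₁] at this; linarith
    have hψ1 : ψ₀ x₁ = ε + κ * F x₁ := by
      rw [hψ₀, hu₀, if_neg hx₁p, if_pos hx₁m]
    have hψ2 : ψ₀ x₂ = -ε + κ * F x₂ := by
      rw [hψ₀, hu₀, if_pos hx₂p]
    have hA : F x₂ - F δ = ∫ y in δ..x₂, ∫ γ in Ω, φ (y - γ) := key δ x₂ (by linarith)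
    have hB : F (-δ) - F x₁ = ∫ y in x₁..(-δ), ∫ γ in Ω, φ (y - γ) := key x₁ (-δ) (by linarith)
    have hAbound : |F x₂ - F δ| ≤ C * η := by
      rw [hA, ← Real.norm_eq_abs]
      have := intervalIntegral.norm_integral_le_of_norm_le_const
        (f := fun y => ∫ γ in Ω, φ (y - γ)) (a := δ) (b := x₂) (C := C)
        (fun y _ => hgbound y)
      rwa [show |x₂ - δ| = η by rw [hx₂]; rw [abs_of_pos (by linarith)]; ring] at this
    have hBbound : |F (-δ) - F x₁| ≤ C * η := by
      rw [hB, ← Real.norm_eq_abs]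
      have := intervalIntegral.norm_integral_le_of_norm_le_const
        (f := fun y => ∫ γ in Ω, φ (y - γ)) (a := x₁) (b := -δ) (C := C)
        (fun y _ => hgbound y)
      rwa [show |-δ - x₁| = η by rw [hx₁]; rw [abs_of_pos (by linarith)]; ring] at this
    have hmono' := hmono hx₁Ω hx₂Ω (by simp only [hx₁, hx₂]; linarith)
    rw [hψ1, hψ2] at hmono'
    -- 2ε ≤ κ (F x₂ - F x₁) = κ ((F x₂ - F δ) + I + (F (-δ) - F x₁)) < 2ε
    have hAle : F x₂ - F δ ≤ C * η := (abs_le.1 hAbound).2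
    have hBle : F (-δ) - F x₁ ≤ C * η := (abs_le.1 hBbound).2
    have hsum : F x₂ - F x₁ ≤ I + 2 * (C * η) := by linarith [hkeyδ]
    have : κ * (F x₂ - F x₁) ≤ κ * (I + 2 * (C * η)) :=
      mul_le_mul_of_nonneg_left hsum hκ.le
    nlinarith [mul_pos hκ hη0]
  · -- positivity of φ*ρ₀ on Ω
    intro x _
    have hIoo : ∀ a b : ℝ, a < b → 0 < ∫ γ in Ioo a b, φ (x - γ) := by
      intro a b hab
      rw [← MeasureTheory.integral_Ioc_eq_integral_Ioo, ← intervalIntegral.integral_of_le hab.le]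
      exact intervalIntegral.intervalIntegral_pos_of_pos
        ((hφcont.comp (continuous_const.sub continuous_id)).intervalIntegrable a b)
        (fun t => hφpos _) hab
    have hdisj : Disjoint Ωp Ωm := by
      rw [hΩp, hΩm]
      apply Set.disjoint_left.2
      intro t ht ht'
      have := ht.1; have := ht'.2; linarith
    have hcont : Continuous fun γ => φ (x - γ) :=
      hφcont.comp (continuous_const.sub continuous_id)
    have hip : IntegrableOn (fun γ => φ (x - γ)) Ωp := by
      rw [hΩp]; exact (hcont.integrableOn_Icc).mono_set Ioo_subset_Icc_self
    have him : IntegrableOn (fun γ => φ (x - γ)) Ωm := by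
      rw [hΩm]; exact (hcont.integrableOn_Icc).mono_set Ioo_subset_Icc_self
    have hΩmmeas : MeasurableSet Ωm := by rw [hΩm]; exact measurableSet_Ioo
    rw [hΩ, MeasureTheory.setIntegral_union hdisj hΩmmeas hip him]
    have h1 : 0 < ∫ γ in Ωp, φ (x - γ) := by rw [hΩp]; exact hIoo _ _ (by linarith)
    have h2 : 0 < ∫ γ in Ωm, φ (x - γ) := by rw [hΩm]; exact hIoo _ _ (by linarith)
    exact mul_pos hκ (by linarith)
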